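/- Let d ≥ 1 be an integer and ρ, M, δ > 0 real numbers. Let O ⊆ ℝ^d be Lebesgue measurable and let ω : O → ℝ^d satisfy ‖ω(ξ)‖ ≤ ρ for all ξ ∈ O and ‖ξ − η‖ ≤ M·‖ω(ξ) − ω(η)‖ for all ξ, η ∈ O. Then there is a constant C depending only on d such that for every nonzero k ∈ ℤ^d, meas({ξ ∈ O : |⟨k, ω(ξ)⟩| ≤ δ}) ≤ C·M^d·ρ^{d−1}·δ/‖k‖. -/

import Mathlib

open MeasureTheory RealInnerProductSpace ENNReal NNReal

theorem stmt_8 (d : ℕ) (hd : 1 ≤ d) :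
    ∃ C : ℝ, 0 < C ∧
      ∀ (ρ M δ : ℝ), 0 < ρ → 0 < M → 0 < δ →
      ∀ (O : Set (EuclideanSpace ℝ (Fin d))), MeasurableSet O →
      ∀ ω : EuclideanSpace ℝ (Fin d) → EuclideanSpace ℝ (Fin d),
        (∀ ξ ∈ O, ‖ω ξ‖ ≤ ρ) →
        (∀ ξ ∈ O, ∀ η ∈ O, ‖ξ - η‖ ≤ M * ‖ω ξ - ω η‖) →
        ∀ k : Fin d → ℤ, k ≠ 0 →
          volume {ξ ∈ O | |∑ i, (k i : ℝ) * ω ξ i| ≤ δ} ≤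
            ENNReal.ofReal
              (C * M ^ d * ρ ^ (d - 1) * δ /
                ‖(EuclideanSpace.equiv (Fin d) ℝ).symm (fun i => (k i : ℝ))‖) := by
  classical
  refine ⟨2 ^ d, by positivity, ?_⟩
  intro ρ M δ hρ hM hδ O hO ω hωρ hωM k hk
  set v : EuclideanSpace ℝ (Fin d) :=
    (EuclideanSpace.equiv (Fin d) ℝ).symm (fun i => (k i : ℝ)) with hv
  have hvi : ∀ i, v i = (k i : ℝ) := fun i => rfl
  have hvne : v ≠ 0 := by
    intro h
    apply hk
    funext i
    have h2 : v i = 0 := by rw [h]; rfl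
    rw [hvi i] at h2
    simpa using h2
  have hvpos : 0 < ‖v‖ := norm_pos_iff.mpr hvne
  have hinner : ∀ y : EuclideanSpace ℝ (Fin d),
      (⟪v, y⟫) = ∑ i, (k i : ℝ) * y i := by
    intro y
    rw [PiLp.inner_apply]
    refine Finset.sum_congr rfl fun i _ => ?_
    rw [RCLike.inner_apply, starRingEnd_apply, star_trivial, hvi i, mul_comm]
  -- The slab set T
  set T : Set (EuclideanSpace ℝ (Fin d)) :=
    {y | ‖y‖ ≤ ρ ∧ |⟪v, y⟫| ≤ δ} with hT
  -- orthonormal basis whose `i0`-th vector is `v/‖v‖`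
  set i0 : Fin d := ⟨0, hd⟩ with hi0
  set u : EuclideanSpace ℝ (Fin d) := ‖v‖⁻¹ • v with hu
  have hun : ‖u‖ = 1 := by
    rw [hu, norm_smul, norm_inv, norm_norm, inv_mul_cancel₀ hvpos.ne']
  have hcard : Module.finrank ℝ (EuclideanSpace ℝ (Fin d)) = Fintype.card (Fin d) := by
    simp [finrank_euclideanSpace_fin]
  have horth : Orthonormal ℝ (({i0} : Set (Fin d)).restrict (fun _ : Fin d => u)) := by
    constructor
    · intro i; exact hun
    · intro i j hij
      exact absurd (Subtype.ext (i.2.trans j.2.symm)) hij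
  obtain ⟨b, hb⟩ := horth.exists_orthonormalBasis_extension_of_card_eq hcard
  have hb0 : b i0 = u := hb i0 rfl
  -- coordinate box containing the image of T
  set r : Fin d → ℝ := fun i => if i = i0 then δ / ‖v‖ else ρ with hr
  set B : Set (Fin d → ℝ) := Set.pi Set.univ (fun i => Set.Icc (-(r i)) (r i)) with hB
  have hri0 : r i0 = δ / ‖v‖ := by simp [hr]
  have hrne : ∀ i, i ≠ i0 → r i = ρ := fun i hi => by simp [hr, hi]
  have hBmeas : MeasurableSet B :=
    MeasurableSet.univ_pi fun i => measurableSet_Icc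
  have hTsub : T ⊆ b.repr ⁻¹' ((MeasurableEquiv.toLp 2 (Fin d → ℝ)).symm ⁻¹' B) := by
    intro y hy i _
    have hcoord : |b.repr y i| ≤ ‖y‖ := by
      have h1 : |b.repr y i| ≤ ‖b.repr y‖ := by
        rw [EuclideanSpace.norm_eq]
        have h0 : |b.repr y i| = Real.sqrt (‖b.repr y i‖ ^ 2) := by
          rw [Real.sqrt_sq_eq_abs]; simp
        rw [h0]
        apply Real.sqrt_le_sqrt
        exact Finset.single_le_sum (f := fun j => ‖b.repr y j‖ ^ 2)
          (fun j _ => sq_nonneg _) (Finset.mem_univ i)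
      rwa [b.repr.norm_map y] at h1
    have habs : |b.repr y i| ≤ r i := by
      by_cases hii : i = i0
      · have h2 : b.repr y i0 = ⟪b i0, y⟫ := b.repr_apply_apply y i0
        rw [hii, hri0, h2, hb0, hu, real_inner_smul_left, abs_mul, abs_inv, abs_norm,
          div_eq_inv_mul]
        exact mul_le_mul_of_nonneg_left hy.2 (inv_nonneg.mpr hvpos.le)
      · rw [hrne i hii]
        exact hcoord.trans hy.1
    exact abs_le.mp habs
  -- volume of the box
  have hTvol : volume T ≤
      ENNReal.ofReal (2 * (δ / ‖v‖)) * ENNReal.ofReal (2 * ρ) ^ (d - 1) := by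
    have hIcc : ∀ i, volume (Set.Icc (-(r i)) (r i)) = ENNReal.ofReal (2 * r i) := by
      intro i; rw [Real.volume_Icc]; congr 1; ring
    calc volume T ≤ volume (b.repr ⁻¹' ((MeasurableEquiv.toLp 2 (Fin d → ℝ)).symm ⁻¹' B)) :=
          measure_mono hTsub
      _ = volume ((MeasurableEquiv.toLp 2 (Fin d → ℝ)).symm ⁻¹' B) :=
          b.measurePreserving_repr.measure_preimage
            (((MeasurableEquiv.toLp 2 (Fin d → ℝ)).symm.measurable hBmeas).nullMeasurableSet)
      _ = volume B :=
          (EuclideanSpace.volume_preserving_symm_measurableEquiv_toLp (Fin d)).measure_preimage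
            hBmeas.nullMeasurableSet
      _ = ∏ i, volume (Set.Icc (-(r i)) (r i)) := volume_pi_pi _
      _ = ∏ i, ENNReal.ofReal (2 * r i) := Finset.prod_congr rfl fun i _ => hIcc i
      _ = ENNReal.ofReal (2 * r i0) * ∏ i ∈ Finset.univ.erase i0, ENNReal.ofReal (2 * r i) :=
          (Finset.mul_prod_erase Finset.univ _ (Finset.mem_univ i0)).symm
      _ = ENNReal.ofReal (2 * (δ / ‖v‖)) *
          ∏ _i ∈ Finset.univ.erase i0, ENNReal.ofReal (2 * ρ) := by
          rw [hri0]
          congr 1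
          exact Finset.prod_congr rfl fun i hi => by
            rw [hrne i (Finset.mem_erase.mp hi).1]
      _ = ENNReal.ofReal (2 * (δ / ‖v‖)) * ENNReal.ofReal (2 * ρ) ^ (d - 1) := by
          rw [Finset.prod_const, Finset.card_erase_of_mem (Finset.mem_univ i0),
            Finset.card_univ, Fintype.card_fin]
  -- the Lipschitz inverse map
  set g : EuclideanSpace ℝ (Fin d) → EuclideanSpace ℝ (Fin d) :=
    Function.invFunOn ω O with hg
  have hgmem : ∀ ξ ∈ O, g (ω ξ) ∈ O ∧ ω (g (ω ξ)) = ω ξ := fun ξ hξ =>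
    ⟨Function.invFunOn_mem ⟨ξ, hξ, rfl⟩, Function.invFunOn_eq ⟨ξ, hξ, rfl⟩⟩
  have hglip : LipschitzOnWith (Real.toNNReal M) g (ω '' O) := by
    apply LipschitzOnWith.of_dist_le_mul
    rintro y₁ ⟨ξ₁, hξ₁, rfl⟩ y₂ ⟨ξ₂, hξ₂, rfl⟩
    obtain ⟨hm₁, he₁⟩ := hgmem ξ₁ hξ₁
    obtain ⟨hm₂, he₂⟩ := hgmem ξ₂ hξ₂
    rw [dist_eq_norm, dist_eq_norm, Real.coe_toNNReal _ hM.le]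
    calc ‖g (ω ξ₁) - g (ω ξ₂)‖ ≤ M * ‖ω (g (ω ξ₁)) - ω (g (ω ξ₂))‖ := hωM _ hm₁ _ hm₂
      _ = M * ‖ω ξ₁ - ω ξ₂‖ := by rw [he₁, he₂]
  -- the resonance set is contained in the image under g of T ∩ ω '' O
  set S : Set (EuclideanSpace ℝ (Fin d)) := {ξ ∈ O | |∑ i, (k i : ℝ) * ω ξ i| ≤ δ} with hS
  have hSsub : S ⊆ g '' (T ∩ ω '' O) := by
    rintro ξ ⟨hξO, hξδ⟩
    refine ⟨ω ξ, ⟨⟨hωρ ξ hξO, by rwa [hinner]⟩, ⟨ξ, hξO, rfl⟩⟩, ?_⟩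
    obtain ⟨hm, he⟩ := hgmem ξ hξO
    have : ‖g (ω ξ) - ξ‖ ≤ M * ‖ω (g (ω ξ)) - ω ξ‖ := hωM _ hm _ hξO
    rw [he, sub_self, norm_zero, mul_zero] at this
    have h0 : g (ω ξ) - ξ = 0 := by
      simpa using le_antisymm this (norm_nonneg _)
    exact (sub_eq_zero.mp h0)
  -- Hausdorff measure is a Haar measure, hence a multiple of volume
  have hfr : ((Module.finrank ℝ (EuclideanSpace ℝ (Fin d))) : ℝ) = (d : ℝ) := by
    rw [finrank_euclideanSpace_fin]
  haveI : (μH[(d : ℝ)] : Measure (EuclideanSpace ℝ (Fin d))).IsAddHaarMeasure := by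
    rw [← hfr]; infer_instance
  have hvolH : (volume : Measure (EuclideanSpace ℝ (Fin d))) =
      Measure.addHaarScalarFactor (volume : Measure (EuclideanSpace ℝ (Fin d))) μH[(d : ℝ)]
        • μH[(d : ℝ)] :=
    Measure.isAddLeftInvariant_eq_smul _ _
  set c := Measure.addHaarScalarFactor (volume : Measure (EuclideanSpace ℝ (Fin d)))
    μH[(d : ℝ)] with hc
  -- Lipschitz image measure bound
  have hlipvol : volume (g '' (T ∩ ω '' O)) ≤
      ENNReal.ofReal M ^ d * volume (T ∩ ω '' O) := by
    have h1 : μH[(d : ℝ)] (g '' (T ∩ ω '' O)) ≤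
        (Real.toNNReal M : ℝ≥0∞) ^ (d : ℝ) * μH[(d : ℝ)] (T ∩ ω '' O) :=
      (hglip.mono Set.inter_subset_right).hausdorffMeasure_image_le (Nat.cast_nonneg d)
    rw [hvolH]
    simp only [Measure.smul_apply, smul_eq_mul]
    calc (c : ℝ≥0∞) * μH[(d : ℝ)] (g '' (T ∩ ω '' O))
        ≤ (c : ℝ≥0∞) * ((Real.toNNReal M : ℝ≥0∞) ^ (d : ℝ) * μH[(d : ℝ)] (T ∩ ω '' O)) :=
          by gcongr
      _ = ENNReal.ofReal M ^ d * ((c : ℝ≥0∞) * μH[(d : ℝ)] (T ∩ ω '' O)) := by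
          rw [ENNReal.rpow_natCast, show ENNReal.ofReal M = (M.toNNReal : ℝ≥0∞) from rfl]
          ring
  -- put everything together
  calc volume S ≤ volume (g '' (T ∩ ω '' O)) := measure_mono hSsub
    _ ≤ ENNReal.ofReal M ^ d * volume (T ∩ ω '' O) := hlipvol
    _ ≤ ENNReal.ofReal M ^ d * volume T :=
        mul_le_mul_of_nonneg_left (measure_mono Set.inter_subset_left) zero_le
    _ ≤ ENNReal.ofReal M ^ d *
        (ENNReal.ofReal (2 * (δ / ‖v‖)) * ENNReal.ofReal (2 * ρ) ^ (d - 1)) :=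
        by gcongr
    _ = ENNReal.ofReal (2 ^ d * M ^ d * ρ ^ (d - 1) * δ / ‖v‖) := by
        rw [← ENNReal.ofReal_pow hM.le, ← ENNReal.ofReal_pow (by positivity),
          ← ENNReal.ofReal_mul (by positivity), ← ENNReal.ofReal_mul (by positivity)]
        congr 1
        have h2 : (2 : ℝ) ^ d = 2 * 2 ^ (d - 1) := by
          conv_lhs => rw [← Nat.sub_add_cancel hd]
          rw [pow_succ]; ring
        rw [mul_pow, h2]
        field_simp
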